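/- arXiv:2505.02132 — 4 statements merged into one kernel-verified Lean document; each statement's English description precedes it below -/
import Mathlib

section
/- For every grid function ω in V⁰ one has (√3/3)·‖ω‖ ≤ ‖𝒜ω‖ ≤ ‖ω‖. -/
open Finset

noncomputable section

/-- spatial mesh size `h = 1/(2J)` -/
def msh (J : ℕ) : ℝ := 1 / (2 * (J : ℝ))

/-- discrete inner product `⟨Q, W⟩ = h ∑_{j=1}^{2J-1} Q_j W_j` -/
def gridIP (J : ℕ) (Q W : ℕ → ℝ) : ℝ :=
  msh J * ∑ j ∈ Finset.Icc 1 (2 * J - 1), Q j * W j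

/-- discrete `L²` norm -/
def gridNorm (J : ℕ) (Q : ℕ → ℝ) : ℝ :=
  Real.sqrt (gridIP J Q Q)

/-- the norm `‖Q‖_A = √(2h ∑_{j=1}^{J} Q_{2j-1}²)` -/
def gridNormA (J : ℕ) (Q : ℕ → ℝ) : ℝ :=
  Real.sqrt (2 * msh J * ∑ j ∈ Finset.Icc 1 J, Q (2 * j - 1) ^ 2)

/-- the norm `‖Q‖_B = √((2/3)‖Q‖² + (1/3)‖Q‖_A²)` -/
def gridNormB (J : ℕ) (Q : ℕ → ℝ) : ℝ :=
  Real.sqrt ((2 / 3) * gridNorm J Q ^ 2 + (1 / 3) * gridNormA J Q ^ 2)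

/-- compact operator `𝒜ω_j = (ω_{j+1} + 10 ω_j + ω_{j-1})/12` (interior formula) -/
def cA (ω : ℕ → ℝ) (j : ℕ) : ℝ := (ω (j + 1) + 10 * ω j + ω (j - 1)) / 12

/-- second difference `δ_xδ_x̄ ω_j = (ω_{j+1} - 2ω_j + ω_{j-1})/h²` -/
def dxx (J : ℕ) (ω : ℕ → ℝ) (j : ℕ) : ℝ :=
  (ω (j + 1) - 2 * ω j + ω (j - 1)) / msh J ^ 2

/-- forward difference `δ_x ω_j = (ω_{j+1} - ω_j)/h` -/
def dxf (J : ℕ) (ω : ℕ → ℝ) (j : ℕ) : ℝ := (ω (j + 1) - ω j) / msh J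

lemma shift_sum (f : ℕ → ℝ) (n : ℕ) :
    ∑ i ∈ Finset.range n, f (i+1) = ∑ i ∈ Finset.range n, f i + f n - f 0 := by
  have h1 := Finset.sum_range_succ' f n
  have h2 := Finset.sum_range_succ f n
  linarith

lemma icc_to_range (f : ℕ → ℝ) (n : ℕ) :
    ∑ j ∈ Finset.Icc 1 n, f j = ∑ i ∈ Finset.range n, f (i + 1) := by
  rw [← Finset.Ico_add_one_right_eq_Icc, Finset.sum_Ico_eq_sum_range]
  simp [add_comm]


/-- For every `ω ∈ V⁰`, `(√3/3)‖ω‖ ≤ ‖𝒜ω‖ ≤ ‖ω‖`. -/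
theorem stmt_1 (J : ℕ) (hJ : 0 < J) (ω : ℕ → ℝ)
    (hω0 : ω 0 = 0) (hωJ : ω (2 * J) = 0) :
    Real.sqrt 3 / 3 * gridNorm J ω ≤ gridNorm J (cA ω) ∧
      gridNorm J (cA ω) ≤ gridNorm J ω := by
  set n := 2 * J - 1 with hn
  have hn1 : n + 1 = 2 * J := by omega
  have hh : 0 < msh J := by
    have : (0:ℝ) < (J:ℝ) := by exact_mod_cast hJ
    unfold msh; positivity
  set T : ℝ := ∑ i ∈ Finset.range n, ω (i+1) ^ 2 with hT
  set S : ℝ := ∑ i ∈ Finset.range n, (cA ω (i+1)) ^ 2 with hS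
  set C : ℝ := ∑ i ∈ Finset.range n, ω (i+1) * ω (i+1+1) with hC
  clear_value T S C
  have hTnn : 0 ≤ T := by
    rw [hT]; exact Finset.sum_nonneg fun i _ => sq_nonneg _
  have hSnn : 0 ≤ S := by
    rw [hS]; exact Finset.sum_nonneg fun i _ => sq_nonneg _
  -- shifted sums
  have hplus : ∑ i ∈ Finset.range n, ω (i+1+1) ^ 2 = T - ω 1 ^ 2 := by
    have h := shift_sum (fun i => ω (i+1) ^ 2) n
    simp only [hn1, hωJ] at h
    rw [hT]; rw [h]; ring
  have hminus : ∑ i ∈ Finset.range n, ω i ^ 2 = T - ω n ^ 2 := by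
    have h := shift_sum (fun i => ω i ^ 2) n
    simp only [hω0] at h
    rw [hT]; linarith [h]
  have hcross : ∑ i ∈ Finset.range n, ω (i+1) * ω i = C := by
    have h := shift_sum (fun i => ω i * ω (i+1)) n
    simp only [hn1, hω0, hωJ, mul_zero, zero_mul] at h
    rw [hC]
    calc ∑ i ∈ Finset.range n, ω (i+1) * ω i
        = ∑ i ∈ Finset.range n, ω i * ω (i+1) := by
          apply Finset.sum_congr rfl; intros; ring
      _ = ∑ i ∈ Finset.range n, ω (i+1) * ω (i+1+1) := by linarith [h]
  -- upper bound: S ≤ T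
  have hST : S ≤ T := by
    have hterm : ∀ i ∈ Finset.range n,
        (cA ω (i+1))^2 ≤ (ω (i+1+1)^2 + 10 * ω (i+1)^2 + ω i^2) / 12 := by
      intro i _
      simp only [cA, Nat.add_sub_cancel]
      nlinarith [sq_nonneg (ω (i+1+1) - ω (i+1)), sq_nonneg (ω (i+1) - ω i),
        sq_nonneg (ω (i+1+1) - ω i)]
    have h1 : S ≤ ∑ i ∈ Finset.range n, (ω (i+1+1)^2 + 10 * ω (i+1)^2 + ω i^2) / 12 := by
      rw [hS]; exact Finset.sum_le_sum hterm
    have h2 : ∑ i ∈ Finset.range n, (ω (i+1+1)^2 + 10 * ω (i+1)^2 + ω i^2) / 12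
        = ((T - ω 1 ^2) + 10 * T + (T - ω n ^2)) / 12 := by
      rw [← Finset.sum_div]
      rw [Finset.sum_add_distrib, Finset.sum_add_distrib, ← Finset.mul_sum]
      rw [hplus, hminus, ← hT]
    nlinarith [sq_nonneg (ω 1), sq_nonneg (ω n)]
  -- lower bound: T ≤ 3 S
  have hexp : ∑ i ∈ Finset.range n, ω (i+1) * cA ω (i+1) = (2 * C + 10 * T) / 12 := by
    have h1 : ∀ i ∈ Finset.range n,
        ω (i+1) * cA ω (i+1)
          = (ω (i+1) * ω (i+1+1) + 10 * ω (i+1)^2 + ω (i+1) * ω i) / 12 := by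
      intro i _
      simp only [cA, Nat.add_sub_cancel]
      ring
    rw [Finset.sum_congr rfl h1, ← Finset.sum_div, Finset.sum_add_distrib,
      Finset.sum_add_distrib, ← Finset.mul_sum, hcross, ← hC, ← hT]
    ring
  have hClow : -T ≤ C := by
    have hterm : ∀ i ∈ Finset.range n,
        -((ω (i+1)^2 + ω (i+1+1)^2) / 2) ≤ ω (i+1) * ω (i+1+1) := by
      intro i _
      nlinarith [sq_nonneg (ω (i+1) + ω (i+1+1))]
    have h1 : ∑ i ∈ Finset.range n, (-((ω (i+1)^2 + ω (i+1+1)^2) / 2)) ≤ C := by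
      rw [hC]; exact Finset.sum_le_sum hterm
    have h2 : ∑ i ∈ Finset.range n, (-((ω (i+1)^2 + ω (i+1+1)^2) / 2))
        = -((T + (T - ω 1 ^2)) / 2) := by
      rw [Finset.sum_neg_distrib, ← Finset.sum_div, Finset.sum_add_distrib, hplus, ← hT]
    nlinarith [sq_nonneg (ω 1)]
  have hI : (2:ℝ)/3 * T ≤ ∑ i ∈ Finset.range n, ω (i+1) * cA ω (i+1) := by
    rw [hexp]; linarith
  have hcs := Finset.sum_mul_sq_le_sq_mul_sq (Finset.range n)
    (fun i => ω (i+1)) (fun i => cA ω (i+1))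
  have hT3S : T ≤ 3 * S := by
    rcases eq_or_lt_of_le hTnn with h0 | h0
    · linarith
    · nlinarith [hI, hcs, hTnn, hSnn]
  -- translate to gridNorm
  have hGω : gridIP J ω ω = msh J * T := by
    unfold gridIP
    rw [← hn, icc_to_range, hT]
    congr 1
    apply Finset.sum_congr rfl; intros; ring
  have hGA : gridIP J (cA ω) (cA ω) = msh J * S := by
    unfold gridIP
    rw [← hn, icc_to_range, hS]
    congr 1
    apply Finset.sum_congr rfl; intros; ring
  constructor
  · unfold gridNorm
    rw [hGω, hGA]
    have ha : 0 ≤ Real.sqrt 3 / 3 * Real.sqrt (msh J * T) := by positivity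
    have hsq : (Real.sqrt 3 / 3 * Real.sqrt (msh J * T))^2 = msh J * T / 3 := by
      rw [mul_pow, div_pow, Real.sq_sqrt (by norm_num : (0:ℝ) ≤ 3),
        Real.sq_sqrt (by positivity : (0:ℝ) ≤ msh J * T)]
      ring
    calc Real.sqrt 3 / 3 * Real.sqrt (msh J * T)
        = Real.sqrt ((Real.sqrt 3 / 3 * Real.sqrt (msh J * T))^2) := (Real.sqrt_sq ha).symm
      _ = Real.sqrt (msh J * T / 3) := by rw [hsq]
      _ ≤ Real.sqrt (msh J * S) := Real.sqrt_le_sqrt (by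
          calc msh J * T / 3 = msh J * (T / 3) := by ring
            _ ≤ msh J * S := mul_le_mul_of_nonneg_left (by linarith) hh.le)
  · unfold gridNorm
    rw [hGω, hGA]
    exact Real.sqrt_le_sqrt (mul_le_mul_of_nonneg_left hST hh.le)
end
end

section
/- Let F : [0,1] → ℝ be six times continuously differentiable and let ζ(s) = 5(1−s)³ − 3(1−s)⁵. Then for every 1 ≤ i ≤ 2J−1: (F''(x_{i+1}) + 10F''(x_i) + F''(x_{i−1}))/12 = (F(x_{i+1}) − 2F(x_i) + F(x_{i−1}))/h² + (h⁴/360)·∫₀¹ [F⁽⁶⁾(x_i − s·h) + F⁽⁶⁾(x_i + s·h)]·ζ(s) ds. -/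
open Finset intervalIntegral MeasureTheory


lemma contDiff_iD {m k : ℕ} {g : ℝ → ℝ} (hg : ContDiff ℝ (m + k : ℕ) g) :
    ContDiff ℝ m (iteratedDeriv k g) := by
  rw [iteratedDeriv_eq_iterate]
  exact ContDiff.iterate_deriv' m k hg

lemma cont_iD {k : ℕ} {g : ℝ → ℝ} (hg : ContDiff ℝ (k : ℕ) g) :
    Continuous (iteratedDeriv k g) := by
  have : ContDiff ℝ (0 + k : ℕ) g := by simpa using hg
  exact (contDiff_iD this).continuous

lemma iD_iD (k m : ℕ) (f : ℝ → ℝ) :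
    iteratedDeriv k (iteratedDeriv m f) = iteratedDeriv (k + m) f := by
  simp only [iteratedDeriv_eq_iterate]
  exact (Function.iterate_add_apply deriv k m f).symm

lemma hasDerivAt_iD {k : ℕ} {g : ℝ → ℝ} (hg : ContDiff ℝ (k + 1 : ℕ) g) (y : ℝ) :
    HasDerivAt (iteratedDeriv k g) (iteratedDeriv (k + 1) g y) y := by
  have h1 : ContDiff ℝ (1 + k : ℕ) g := by rwa [Nat.add_comm]
  have h2 : ContDiff ℝ 1 (iteratedDeriv k g) := by
    have := contDiff_iD (m := 1) h1
    simpa using this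
  have h3 : DifferentiableAt ℝ (iteratedDeriv k g) y :=
    (h2.differentiable one_ne_zero).differentiableAt
  rw [iteratedDeriv_succ]
  exact h3.hasDerivAt

lemma taylor_int (g : ℝ → ℝ) (x h : ℝ) :
    ∀ n : ℕ, ContDiff ℝ (n + 1 : ℕ) g →
      g (x + h) = (∑ k ∈ Finset.range (n + 1), h ^ k / (k.factorial : ℝ) * iteratedDeriv k g x)
        + ∫ s in (0:ℝ)..1, h ^ (n + 1) * (1 - s) ^ n / (n.factorial : ℝ)
            * iteratedDeriv (n + 1) g (x + s * h) := by
  intro n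
  induction n with
  | zero =>
    intro hg
    have hder : ∀ s ∈ Set.uIcc (0:ℝ) 1, HasDerivAt (fun t => g (x + t * h))
        (h ^ (0+1) * (1 - s) ^ 0 / (Nat.factorial 0 : ℝ) * iteratedDeriv (0+1) g (x + s * h)) s := by
      intro s _
      have h1 : HasDerivAt (fun t : ℝ => x + t * h) h s := by
        simpa using ((hasDerivAt_id s).mul_const h).const_add x
      have h2 : HasDerivAt g (iteratedDeriv 1 g (x + s * h)) (x + s * h) := by
        simpa [iteratedDeriv_zero] using hasDerivAt_iD (k := 0) (by simpa using hg) (x + s * h)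
      have := h2.comp s h1
      simp only [Function.comp_def] at this
      simp only [pow_one, pow_zero, Nat.factorial_zero, Nat.cast_one, mul_one, div_one]
      simpa [mul_comm] using this
    have hint : IntervalIntegrable (fun s : ℝ => h ^ (0+1) * (1 - s) ^ 0 / (Nat.factorial 0 : ℝ)
        * iteratedDeriv (0+1) g (x + s * h)) volume 0 1 := by
      apply Continuous.intervalIntegrable
      have hc : Continuous (iteratedDeriv 1 g) := cont_iD hg
      fun_prop
    rw [intervalIntegral.integral_eq_sub_of_hasDerivAt hder hint]
    simp [Finset.sum_range_one]
  | succ n ih =>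
    intro hg
    have hg' : ContDiff ℝ (n + 1 : ℕ) g := hg.of_le (by exact_mod_cast Nat.le_succ _)
    have base := ih hg'
    have hfne : ((n + 1).factorial : ℝ) ≠ 0 := by
      exact_mod_cast (Nat.factorial_pos (n+1)).ne'
    have hfne' : (n.factorial : ℝ) ≠ 0 := by
      exact_mod_cast (Nat.factorial_pos n).ne'
    set u : ℝ → ℝ := fun s => -((1 - s) ^ (n + 1) / ((n + 1).factorial : ℝ)) with hu
    set u' : ℝ → ℝ := fun s => (1 - s) ^ n / (n.factorial : ℝ) with hu'
    set v : ℝ → ℝ := fun s => iteratedDeriv (n + 1) g (x + s * h) with hv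
    set v' : ℝ → ℝ := fun s => h * iteratedDeriv (n + 2) g (x + s * h) with hv'
    have hcont6 : Continuous (iteratedDeriv (n + 2) g) := cont_iD (by exact_mod_cast hg)
    have hcont5 : Continuous (iteratedDeriv (n + 1) g) := cont_iD (by
      exact hg'.of_le (by norm_num))
    have hder_u : ∀ s ∈ Set.uIcc (0:ℝ) 1, HasDerivAt u (u' s) s := by
      intro s _
      have h1 : HasDerivAt (fun t : ℝ => 1 - t) (-1) s := by
        simpa using (hasDerivAt_id s).const_sub 1
      have h2 := ((h1.pow (n + 1)).div_const (((n + 1).factorial : ℝ))).neg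
      have heq : u' s = -((((n + 1) : ℕ) : ℝ) * (1 - s) ^ (n + 1 - 1) * (-1)
          / ((n + 1).factorial : ℝ)) := by
        simp only [hu', Nat.add_sub_cancel]
        rw [Nat.factorial_succ]
        push_cast
        field_simp
      rw [heq]
      exact h2
    have hder_v : ∀ s ∈ Set.uIcc (0:ℝ) 1, HasDerivAt v (v' s) s := by
      intro s _
      have h1 : HasDerivAt (fun t : ℝ => x + t * h) h s := by
        simpa using ((hasDerivAt_id s).mul_const h).const_add x
      have h2 : HasDerivAt (iteratedDeriv (n + 1) g) (iteratedDeriv (n + 2) g (x + s * h))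
          (x + s * h) := hasDerivAt_iD (by exact_mod_cast hg) (x + s * h)
      have := h2.comp s h1
      simp only [Function.comp_def] at this
      simpa [hv, hv', mul_comm] using this
    have hint_u : IntervalIntegrable u' volume 0 1 := by
      apply Continuous.intervalIntegrable; fun_prop
    have hint_v : IntervalIntegrable v' volume 0 1 := by
      apply Continuous.intervalIntegrable; fun_prop
    have ibp := intervalIntegral.integral_mul_deriv_eq_deriv_mul
      (fun s hs => hder_u s hs) (fun s hs => hder_v s hs) hint_u hint_v
    have hu1 : u 1 = 0 := by simp [hu]
    have hu0 : u 0 = -(1 / ((n + 1).factorial : ℝ)) := by simp [hu]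
    have hv0 : v 0 = iteratedDeriv (n + 1) g x := by simp [hv]
    rw [hu1, hu0, hv0] at ibp
    have hrem : (∫ s in (0:ℝ)..1, h ^ (n + 1) * (1 - s) ^ n / (n.factorial : ℝ)
          * iteratedDeriv (n + 1) g (x + s * h))
        = h ^ (n + 1) * ∫ s in (0:ℝ)..1, u' s * v s := by
      rw [← intervalIntegral.integral_const_mul]
      apply intervalIntegral.integral_congr
      intro s _
      simp only [hu', hv]
      ring
    have hnew : h ^ (n + 1) * (∫ s in (0:ℝ)..1, u s * v' s)
        = -(∫ s in (0:ℝ)..1, h ^ (n + 1 + 1) * (1 - s) ^ (n + 1) / ((n + 1).factorial : ℝ)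
            * iteratedDeriv (n + 1 + 1) g (x + s * h)) := by
      rw [← intervalIntegral.integral_const_mul, ← intervalIntegral.integral_neg]
      apply intervalIntegral.integral_congr
      intro s _
      simp only [hu, hv']
      have : n + 1 + 1 = n + 2 := rfl
      rw [this]
      ring
    rw [Finset.sum_range_succ]
    linear_combination base + hrem + h ^ (n + 1) * ibp - hnew


noncomputable section

/-- compact-difference identity with integral remainder (Lemma 2.3). -/
theorem stmt_2 (J : ℕ) (hJ : 0 < J) (F : ℝ → ℝ) (hF : ContDiff ℝ 6 F)
    (i : ℕ) (hi1 : 1 ≤ i) (hi2 : i ≤ 2 * J - 1) :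
    (iteratedDeriv 2 F ((↑(i + 1) : ℝ) * msh J) + 10 * iteratedDeriv 2 F ((i : ℝ) * msh J)
        + iteratedDeriv 2 F ((↑(i - 1) : ℝ) * msh J)) / 12
      = (F ((↑(i + 1) : ℝ) * msh J) - 2 * F ((i : ℝ) * msh J) + F ((↑(i - 1) : ℝ) * msh J))
            / msh J ^ 2
        + msh J ^ 4 / 360 *
            ∫ s in (0:ℝ)..1,
              (iteratedDeriv 6 F ((i : ℝ) * msh J - s * msh J)
                  + iteratedDeriv 6 F ((i : ℝ) * msh J + s * msh J))
                * (5 * (1 - s) ^ 3 - 3 * (1 - s) ^ 5) := by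
  have hJ' : (0:ℝ) < (J:ℝ) := by exact_mod_cast hJ
  have hhpos : 0 < msh J := by rw [msh]; positivity
  set x : ℝ := (i : ℝ) * msh J with hx
  set hh : ℝ := msh J with hhh
  have hhne : hh ≠ 0 := ne_of_gt hhpos
  have hip : ((i + 1 : ℕ) : ℝ) * msh J = x + hh := by push_cast [hx, hhh]; ring
  have him : ((i - 1 : ℕ) : ℝ) * msh J = x - hh := by
    have h1 : ((i - 1 : ℕ) : ℝ) = (i : ℝ) - 1 := by
      push_cast [Nat.cast_sub hi1]; ring
    rw [h1, hx, hhh]; ring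
  rw [hip, him]
  have hF6 : ContDiff ℝ ((5 : ℕ) + 1 : ℕ) F := by exact_mod_cast hF
  have hF24 : ContDiff ℝ ((4 : ℕ) + (2 : ℕ) : ℕ) F := by exact_mod_cast hF
  have hF2 : ContDiff ℝ ((3 : ℕ) + 1 : ℕ) (iteratedDeriv 2 F) := contDiff_iD hF24
  have T1 := taylor_int F x hh 5 hF6
  have T2 := taylor_int F x (-hh) 5 hF6
  have T3 := taylor_int (iteratedDeriv 2 F) x hh 3 hF2
  have T4 := taylor_int (iteratedDeriv 2 F) x (-hh) 3 hF2
  norm_num [Finset.sum_range_succ, Nat.factorial, iD_iD] at T1 T2 T3 T4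
  rw [show x + -hh = x - hh by ring] at T2 T4
  have c6 : Continuous (iteratedDeriv 6 F) := cont_iD (by exact_mod_cast hF)
  have E1 : (∫ s in (0:ℝ)..1, hh ^ 6 * (1 - s) ^ 5 / 120 * iteratedDeriv 6 F (x + s * hh))
      = hh ^ 6 / 120 * ∫ s in (0:ℝ)..1, (1 - s) ^ 5 * iteratedDeriv 6 F (x + s * hh) := by
    rw [← intervalIntegral.integral_const_mul]
    apply intervalIntegral.integral_congr
    intro s _; ring
  have E2 : (∫ s in (0:ℝ)..1, hh ^ 6 * (1 - s) ^ 5 / 120 * iteratedDeriv 6 F (x + -(s * hh)))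
      = hh ^ 6 / 120 * ∫ s in (0:ℝ)..1, (1 - s) ^ 5 * iteratedDeriv 6 F (x - s * hh) := by
    rw [← intervalIntegral.integral_const_mul]
    apply intervalIntegral.integral_congr
    intro s _
    dsimp only
    rw [show x + -(s * hh) = x - s * hh by ring]
    ring
  have E3 : (∫ s in (0:ℝ)..1, hh ^ 4 * (1 - s) ^ 3 / 6 * iteratedDeriv 6 F (x + s * hh))
      = hh ^ 4 / 6 * ∫ s in (0:ℝ)..1, (1 - s) ^ 3 * iteratedDeriv 6 F (x + s * hh) := by
    rw [← intervalIntegral.integral_const_mul]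
    apply intervalIntegral.integral_congr
    intro s _; ring
  have E4 : (∫ s in (0:ℝ)..1, hh ^ 4 * (1 - s) ^ 3 / 6 * iteratedDeriv 6 F (x + -(s * hh)))
      = hh ^ 4 / 6 * ∫ s in (0:ℝ)..1, (1 - s) ^ 3 * iteratedDeriv 6 F (x - s * hh) := by
    rw [← intervalIntegral.integral_const_mul]
    apply intervalIntegral.integral_congr
    intro s _
    dsimp only
    rw [show x + -(s * hh) = x - s * hh by ring]
    ring
  rw [E1] at T1
  rw [E2] at T2
  rw [E3] at T3
  rw [E4] at T4
  have i3m : IntervalIntegrable (fun s : ℝ => 5 * ((1 - s) ^ 3 * iteratedDeriv 6 F (x - s * hh)))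
      volume 0 1 := by apply Continuous.intervalIntegrable; fun_prop
  have i3p : IntervalIntegrable (fun s : ℝ => 5 * ((1 - s) ^ 3 * iteratedDeriv 6 F (x + s * hh)))
      volume 0 1 := by apply Continuous.intervalIntegrable; fun_prop
  have i5m : IntervalIntegrable (fun s : ℝ => 3 * ((1 - s) ^ 5 * iteratedDeriv 6 F (x - s * hh)))
      volume 0 1 := by apply Continuous.intervalIntegrable; fun_prop
  have i5p : IntervalIntegrable (fun s : ℝ => 3 * ((1 - s) ^ 5 * iteratedDeriv 6 F (x + s * hh)))
      volume 0 1 := by apply Continuous.intervalIntegrable; fun_prop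
  have key : (∫ s in (0:ℝ)..1,
        (iteratedDeriv 6 F (x - s * hh) + iteratedDeriv 6 F (x + s * hh))
          * (5 * (1 - s) ^ 3 - 3 * (1 - s) ^ 5))
      = 5 * (∫ s in (0:ℝ)..1, (1 - s) ^ 3 * iteratedDeriv 6 F (x - s * hh))
        + 5 * (∫ s in (0:ℝ)..1, (1 - s) ^ 3 * iteratedDeriv 6 F (x + s * hh))
        - (3 * (∫ s in (0:ℝ)..1, (1 - s) ^ 5 * iteratedDeriv 6 F (x - s * hh))
          + 3 * (∫ s in (0:ℝ)..1, (1 - s) ^ 5 * iteratedDeriv 6 F (x + s * hh))) := by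
    rw [← intervalIntegral.integral_const_mul, ← intervalIntegral.integral_const_mul,
      ← intervalIntegral.integral_const_mul, ← intervalIntegral.integral_const_mul,
      ← intervalIntegral.integral_add i3m i3p, ← intervalIntegral.integral_add i5m i5p,
      ← intervalIntegral.integral_sub (i3m.add i3p) (i5m.add i5p)]
    apply intervalIntegral.integral_congr
    intro s _; ring
  rw [key]
  field_simp
  simp only [show ∀ s, hh * s = s * hh from fun s => mul_comm _ _]
  linear_combination (360 * hh ^ 2) * T3 + (360 * hh ^ 2) * T4 - 4320 * T1 - 4320 * T2
end
end

section
/- For every grid function ω in V⁰ one has ‖ω‖_A ≤ √2·‖ω‖ and (√6/3)·‖ω‖ ≤ ‖ω‖_B ≤ (2√3/3)·‖ω‖. -/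
open Finset

noncomputable section

/-- For every `ω ∈ V⁰`, `‖ω‖_A ≤ √2 ‖ω‖` and
`(√6/3)‖ω‖ ≤ ‖ω‖_B ≤ (2√3/3)‖ω‖`. -/
theorem stmt_4 (J : ℕ) (hJ : 0 < J) (ω : ℕ → ℝ)
    (hω0 : ω 0 = 0) (hωJ : ω (2 * J) = 0) :
    gridNormA J ω ≤ Real.sqrt 2 * gridNorm J ω ∧
      Real.sqrt 6 / 3 * gridNorm J ω ≤ gridNormB J ω ∧
      gridNormB J ω ≤ 2 * Real.sqrt 3 / 3 * gridNorm J ω := by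
  have hh : 0 < msh J := by
    unfold msh
    positivity
  -- A² ≤ 2 N²
  set N := gridNorm J ω with hNdef
  set A := gridNormA J ω with hAdef
  have hIPnn : 0 ≤ gridIP J ω ω := by
    unfold gridIP
    apply mul_nonneg hh.le
    exact Finset.sum_nonneg fun j _ => mul_self_nonneg _
  have hNnn : 0 ≤ N := Real.sqrt_nonneg _
  have hN2 : N ^ 2 = msh J * ∑ j ∈ Finset.Icc 1 (2 * J - 1), ω j ^ 2 := by
    rw [hNdef]
    unfold gridNorm
    rw [Real.sq_sqrt hIPnn]
    unfold gridIP
    congr 1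
    exact Finset.sum_congr rfl fun j _ => (sq (ω j)).symm
  have hAnn : 0 ≤ A := Real.sqrt_nonneg _
  have hA2nn : 0 ≤ 2 * msh J * ∑ j ∈ Finset.Icc 1 J, ω (2 * j - 1) ^ 2 := by
    apply mul_nonneg (by linarith)
    exact Finset.sum_nonneg fun j _ => sq_nonneg _
  have hA2 : A ^ 2 = 2 * msh J * ∑ j ∈ Finset.Icc 1 J, ω (2 * j - 1) ^ 2 := by
    rw [hAdef]; unfold gridNormA; rw [Real.sq_sqrt hA2nn]
  have hsumle : ∑ j ∈ Finset.Icc 1 J, ω (2 * j - 1) ^ 2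
      ≤ ∑ j ∈ Finset.Icc 1 (2 * J - 1), ω j ^ 2 := by
    have hinj : Set.InjOn (fun j => 2 * j - 1) (Finset.Icc 1 J : Finset ℕ) := by
      intro a ha b hb hab
      simp only [Finset.coe_Icc, Set.mem_Icc] at ha hb
      dsimp only at hab
      omega
    have heq : ∑ j ∈ Finset.Icc 1 J, ω (2 * j - 1) ^ 2
        = ∑ x ∈ (Finset.Icc 1 J).image (fun j => 2 * j - 1), ω x ^ 2 :=
      (Finset.sum_image (f := fun x => ω x ^ 2) (fun a ha b hb => hinj ha hb)).symm
    rw [heq]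
    apply Finset.sum_le_sum_of_subset_of_nonneg
    · intro x hx
      simp only [Finset.mem_image, Finset.mem_Icc] at hx ⊢
      omega
    · intro i _ _; exact sq_nonneg _
  have hkey : A ^ 2 ≤ 2 * N ^ 2 := by
    rw [hA2, hN2]
    nlinarith [hsumle, hh.le]
  refine ⟨?_, ?_, ?_⟩
  · have : A ^ 2 ≤ (Real.sqrt 2 * N) ^ 2 := by
      rw [mul_pow, Real.sq_sqrt (by norm_num : (2:ℝ) ≥ 0)]
      linarith
    have h2 : 0 ≤ Real.sqrt 2 * N := mul_nonneg (Real.sqrt_nonneg _) hNnn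
    nlinarith [sq_nonneg (A - Real.sqrt 2 * N), sq_nonneg (A + Real.sqrt 2 * N)]
  · unfold gridNormB
    rw [← hNdef, ← hAdef]
    have h1 : (Real.sqrt 6 / 3 * N) ^ 2 ≤ (2 / 3) * N ^ 2 + (1 / 3) * A ^ 2 := by
      rw [mul_pow, div_pow, Real.sq_sqrt (by norm_num : (6:ℝ) ≥ 0)]
      nlinarith [sq_nonneg A]
    have h2 : 0 ≤ Real.sqrt 6 / 3 * N := by positivity
    calc Real.sqrt 6 / 3 * N = Real.sqrt ((Real.sqrt 6 / 3 * N) ^ 2) := by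
          rw [Real.sqrt_sq h2]
      _ ≤ _ := Real.sqrt_le_sqrt h1
  · unfold gridNormB
    rw [← hNdef, ← hAdef]
    have h1 : (2 / 3) * N ^ 2 + (1 / 3) * A ^ 2 ≤ (2 * Real.sqrt 3 / 3 * N) ^ 2 := by
      have : (2 * Real.sqrt 3 / 3) ^ 2 = 4 / 3 := by
        rw [div_pow, mul_pow, Real.sq_sqrt (by norm_num : (3:ℝ) ≥ 0)]
        norm_num
      rw [mul_pow, this]
      linarith
    have h2 : 0 ≤ 2 * Real.sqrt 3 / 3 * N := by positivity
    calc Real.sqrt ((2 / 3) * N ^ 2 + (1 / 3) * A ^ 2)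
        ≤ Real.sqrt ((2 * Real.sqrt 3 / 3 * N) ^ 2) := Real.sqrt_le_sqrt h1
      _ = _ := Real.sqrt_sq h2
end
end

section
/- Suppose P : ℝ → ℝ satisfies P(z) ≥ p₀ > 0 for all z ≥ 0, and suppose grid-function sequences (U^n)_{n=0}^{N+1}, (V^n)_{n=0}^{N+1} in V⁰ satisfy the fully discrete compact scheme with zero source: for all 1 ≤ n ≤ N and 1 ≤ j ≤ 2J−1, 𝒜δ_t⁽²⁾U_j^n + P(‖V^n‖_B²)·𝒜δ̄_tU_j^n + δ_xδ_x̄Ṽ_j^n = 0 and 𝒜δ̄_tV_j^n = δ_xδ_x̄δ̄_tU_j^n. Then the discrete energy Ê^n := √(‖𝒜δ_tU^{n+1}‖² + (1/2)(‖𝒜V^{n+1}‖² + ‖𝒜V^n‖²)) satisfies 0 ≤ Ê^n ≤ Ê^0 for all 1 ≤ n ≤ N. -/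
open Finset

noncomputable section

/-- the discrete energy `Ê^n = √(‖𝒜δ_t U^{n+1}‖² + (1/2)(‖𝒜V^{n+1}‖² + ‖𝒜V^n‖²))` -/
def energyE (J : ℕ) (τ : ℝ) (U V : ℕ → ℕ → ℝ) (n : ℕ) : ℝ :=
  Real.sqrt (gridNorm J (cA fun i => (U (n + 1) i - U n i) / τ) ^ 2
    + 1 / 2 * (gridNorm J (cA (V (n + 1))) ^ 2 + gridNorm J (cA (V n)) ^ 2))

lemma telesum (M : ℕ) (T : ℕ → ℝ) :
    ∑ j ∈ Finset.Icc 1 M, (T j - T (j - 1)) = T M - T 0 := by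
  induction M with
  | zero => simp
  | succ m ih =>
    rw [Finset.sum_Icc_succ_top (by omega), ih]
    have : m + 1 - 1 = m := by omega
    rw [this]; ring

lemma sbp (M : ℕ) (hM : 1 ≤ M) (w z : ℕ → ℝ) (hw0 : w 0 = 0) (hwM : w M = 0)
    (hz0 : z 0 = 0) (hzM : z M = 0) :
    ∑ j ∈ Finset.Icc 1 (M - 1), (w (j + 1) - 2 * w j + w (j - 1)) * z j
      = ∑ j ∈ Finset.Icc 1 (M - 1), w j * (z (j + 1) - 2 * z j + z (j - 1)) := by
  set T : ℕ → ℝ := fun j => w (j + 1) * z j - w j * z (j + 1) with hT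
  have key : ∑ j ∈ Finset.Icc 1 (M - 1),
      ((w (j + 1) - 2 * w j + w (j - 1)) * z j - w j * (z (j + 1) - 2 * z j + z (j - 1)))
      = T (M - 1) - T 0 := by
    rw [← telesum (M - 1) T]
    apply Finset.sum_congr rfl
    intro j hj
    simp only [Finset.mem_Icc] at hj
    have h1 : j - 1 + 1 = j := by omega
    simp only [hT, h1]
    ring
  have hTM : T (M - 1) = 0 := by
    have h1 : M - 1 + 1 = M := by omega
    simp [hT, h1, hwM, hzM]
  have hT0 : T 0 = 0 := by simp [hT, hw0, hz0]
  rw [hTM, hT0] at key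
  have := Finset.sum_sub_distrib (s := Finset.Icc 1 (M-1))
    (f := fun j => (w (j + 1) - 2 * w j + w (j - 1)) * z j)
    (g := fun j => w j * (z (j + 1) - 2 * z j + z (j - 1)))
  linarith [key, this]

/-- summation by parts for `dxx`. -/
lemma dxx_sbp (J : ℕ) (hJ : 0 < J) (w z : ℕ → ℝ) (hw0 : w 0 = 0) (hwM : w (2*J) = 0)
    (hz0 : z 0 = 0) (hzM : z (2*J) = 0) :
    ∑ j ∈ Finset.Icc 1 (2*J - 1), dxx J w j * z j
      = ∑ j ∈ Finset.Icc 1 (2*J - 1), w j * dxx J z j := by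
  have h1 : ∑ j ∈ Finset.Icc 1 (2*J - 1), dxx J w j * z j
      = (∑ j ∈ Finset.Icc 1 (2*J - 1), (w (j + 1) - 2 * w j + w (j - 1)) * z j) / msh J ^ 2 := by
    rw [Finset.sum_div]
    apply Finset.sum_congr rfl
    intro j _; simp only [dxx]; ring
  have h2 : ∑ j ∈ Finset.Icc 1 (2*J - 1), w j * dxx J z j
      = (∑ j ∈ Finset.Icc 1 (2*J - 1), w j * (z (j + 1) - 2 * z j + z (j - 1))) / msh J ^ 2 := by
    rw [Finset.sum_div]
    apply Finset.sum_congr rfl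
    intro j _; simp only [dxx]; ring
  rw [h1, h2, sbp (2*J) (by omega) w z hw0 hwM hz0 hzM]

lemma step (J : ℕ) (hJ : 0 < J) (τ : ℝ) (hτ : 0 < τ) (p : ℝ) (hp : 0 ≤ p)
    (u0 u1 u2 v0 v1 v2 : ℕ → ℝ)
    (hu00 : u0 0 = 0) (hu0M : u0 (2*J) = 0) (hu20 : u2 0 = 0) (hu2M : u2 (2*J) = 0)
    (hv00 : v0 0 = 0) (hv0M : v0 (2*J) = 0) (hv20 : v2 0 = 0) (hv2M : v2 (2*J) = 0)
    (heq1 : ∀ j ∈ Finset.Icc 1 (2*J - 1),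
      cA (fun i => (u2 i - 2 * u1 i + u0 i) / τ ^ 2) j
        + p * cA (fun i => (u2 i - u0 i) / (2 * τ)) j
        + dxx J (fun i => (v2 i + v0 i) / 2) j = 0)
    (heq2 : ∀ j ∈ Finset.Icc 1 (2*J - 1),
      cA (fun i => (v2 i - v0 i) / (2 * τ)) j
        = dxx J (fun i => (u2 i - u0 i) / (2 * τ)) j) :
    gridIP J (cA fun i => (u2 i - u1 i) / τ) (cA fun i => (u2 i - u1 i) / τ)
      + 1 / 2 * (gridIP J (cA v2) (cA v2) + gridIP J (cA v1) (cA v1))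
    ≤ gridIP J (cA fun i => (u1 i - u0 i) / τ) (cA fun i => (u1 i - u0 i) / τ)
      + 1 / 2 * (gridIP J (cA v1) (cA v1) + gridIP J (cA v0) (cA v0)) := by
  have hh : (0:ℝ) < msh J := by
    have : (0:ℝ) < (J:ℝ) := by exact_mod_cast hJ
    simp only [msh]; positivity
  have hhne : msh J ≠ 0 := hh.ne'
  have hτne : τ ≠ 0 := hτ.ne'
  set S := Finset.Icc 1 (2*J - 1) with hS
  set d2 : ℕ → ℝ := fun i => (u2 i - 2 * u1 i + u0 i) / τ ^ 2 with hd2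
  set bb : ℕ → ℝ := fun i => (u2 i - u0 i) / (2 * τ) with hbb
  set vt : ℕ → ℝ := fun i => (v2 i + v0 i) / 2 with hvt
  set vd : ℕ → ℝ := fun i => (v2 i - v0 i) / (2 * τ) with hvd
  set a2 : ℕ → ℝ := fun i => (u2 i - u1 i) / τ with ha2
  set a1 : ℕ → ℝ := fun i => (u1 i - u0 i) / τ with ha1
  -- the basic summed identity
  have hzero : ∑ j ∈ S, (cA d2 j + p * cA bb j + dxx J vt j) * cA bb j * (4 * τ) = 0 := by
    apply Finset.sum_eq_zero
    intro j hj
    rw [heq1 j hj]; ring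
  -- pointwise: first term
  have hA : ∀ j, cA d2 j * cA bb j * (4 * τ) = 2 * (cA a2 j ^ 2 - cA a1 j ^ 2) := by
    intro j
    simp only [cA, hd2, hbb, ha2, ha1]
    field_simp
    ring
  -- split of cA into identity + (h²/12) dxx
  have hsplit : ∀ (w : ℕ → ℝ) (j : ℕ), cA w j = w j + msh J ^ 2 / 12 * dxx J w j := by
    intro w j
    simp only [cA, dxx]
    field_simp
    ring
  -- third term: summation by parts etc.
  have hE3 : ∑ j ∈ S, dxx J vt j * cA bb j = ∑ j ∈ S, cA vt j * cA vd j := by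
    have e1 : ∑ j ∈ S, dxx J vt j * cA bb j
        = ∑ j ∈ S, dxx J vt j * bb j + msh J ^ 2 / 12 * ∑ j ∈ S, dxx J vt j * dxx J bb j := by
      rw [Finset.mul_sum, ← Finset.sum_add_distrib]
      apply Finset.sum_congr rfl
      intro j _
      rw [hsplit bb j]; ring
    have e2 : ∑ j ∈ S, dxx J vt j * bb j = ∑ j ∈ S, vt j * dxx J bb j := by
      apply dxx_sbp J hJ
      · simp [hvt, hv00, hv20]
      · simp [hvt, hv0M, hv2M]
      · simp [hbb, hu00, hu20]
      · simp [hbb, hu0M, hu2M]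
    have e3 : ∑ j ∈ S, vt j * dxx J bb j = ∑ j ∈ S, vt j * cA vd j := by
      apply Finset.sum_congr rfl
      intro j hj
      rw [← heq2 j hj]
    have e4 : ∑ j ∈ S, dxx J vt j * dxx J bb j = ∑ j ∈ S, dxx J vt j * cA vd j := by
      apply Finset.sum_congr rfl
      intro j hj
      rw [← heq2 j hj]
    rw [e1, e2, e3, e4, Finset.mul_sum, ← Finset.sum_add_distrib]
    apply Finset.sum_congr rfl
    intro j _
    rw [hsplit vt j]; ring
  have hC : ∀ j, cA vt j * cA vd j * (4 * τ) = cA v2 j ^ 2 - cA v0 j ^ 2 := by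
    intro j
    simp only [cA, hvt, hvd]
    field_simp
    ring
  -- assemble
  have key : 2 * (∑ j ∈ S, cA a2 j ^ 2 - ∑ j ∈ S, cA a1 j ^ 2)
      + 4 * τ * p * ∑ j ∈ S, cA bb j ^ 2
      + (∑ j ∈ S, cA v2 j ^ 2 - ∑ j ∈ S, cA v0 j ^ 2) = 0 := by
    have expand : ∑ j ∈ S, (cA d2 j + p * cA bb j + dxx J vt j) * cA bb j * (4 * τ)
        = ∑ j ∈ S, cA d2 j * cA bb j * (4 * τ)
          + 4 * τ * p * ∑ j ∈ S, cA bb j ^ 2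
          + (∑ j ∈ S, dxx J vt j * cA bb j) * (4 * τ) := by
      have pw : ∀ j ∈ S, (cA d2 j + p * cA bb j + dxx J vt j) * cA bb j * (4 * τ)
          = cA d2 j * cA bb j * (4 * τ) + 4 * τ * p * cA bb j ^ 2
            + dxx J vt j * cA bb j * (4 * τ) := by
        intro j _; ring
      rw [Finset.sum_congr rfl pw, Finset.sum_add_distrib, Finset.sum_add_distrib,
        ← Finset.mul_sum, ← Finset.sum_mul]
      congr 1
      rw [Finset.sum_mul]
    have t1 : ∑ j ∈ S, cA d2 j * cA bb j * (4 * τ)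
        = 2 * (∑ j ∈ S, cA a2 j ^ 2 - ∑ j ∈ S, cA a1 j ^ 2) := by
      rw [← Finset.sum_sub_distrib, Finset.mul_sum]
      apply Finset.sum_congr rfl
      intro j _; rw [hA j]
    have t3 : (∑ j ∈ S, dxx J vt j * cA bb j) * (4 * τ)
        = ∑ j ∈ S, cA v2 j ^ 2 - ∑ j ∈ S, cA v0 j ^ 2 := by
      rw [hE3, ← Finset.sum_sub_distrib, Finset.sum_mul]
      apply Finset.sum_congr rfl
      intro j _; rw [← hC j]
    rw [expand, t1, t3] at hzero
    linarith [hzero]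
  have hBpos : 0 ≤ ∑ j ∈ S, cA bb j ^ 2 := Finset.sum_nonneg fun j _ => sq_nonneg _
  -- convert gridIP to sums of squares
  have ipsq : ∀ Q : ℕ → ℝ, gridIP J Q Q = msh J * ∑ j ∈ S, Q j ^ 2 := by
    intro Q
    simp only [gridIP, hS]
    congr 1
    apply Finset.sum_congr rfl
    intro j _; ring
  rw [ipsq, ipsq, ipsq, ipsq, ipsq]
  have hfac : 0 ≤ msh J * (4 * τ * p * ∑ j ∈ S, cA bb j ^ 2) := by
    apply mul_nonneg hh.le
    apply mul_nonneg (by positivity) hBpos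
  nlinarith [mul_le_mul_of_nonneg_left (le_of_eq key) hh.le]

def Gfun (J : ℕ) (τ : ℝ) (U V : ℕ → ℕ → ℝ) (n : ℕ) : ℝ :=
  gridIP J (cA fun i => (U (n + 1) i - U n i) / τ) (cA fun i => (U (n + 1) i - U n i) / τ)
    + 1 / 2 * (gridIP J (cA (V (n + 1))) (cA (V (n + 1))) + gridIP J (cA (V n)) (cA (V n)))

lemma gridIP_self_nonneg (J : ℕ) (Q : ℕ → ℝ) : 0 ≤ gridIP J Q Q := by
  apply mul_nonneg
  · simp only [msh]; positivity
  · exact Finset.sum_nonneg fun j _ => mul_self_nonneg _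

lemma Gfun_nonneg (J : ℕ) (τ : ℝ) (U V : ℕ → ℕ → ℝ) (n : ℕ) : 0 ≤ Gfun J τ U V n := by
  have h1 := gridIP_self_nonneg J (cA fun i => (U (n + 1) i - U n i) / τ)
  have h2 := gridIP_self_nonneg J (cA (V (n + 1)))
  have h3 := gridIP_self_nonneg J (cA (V n))
  simp only [Gfun]; linarith

lemma energyE_eq (J : ℕ) (τ : ℝ) (U V : ℕ → ℕ → ℝ) (n : ℕ) :
    energyE J τ U V n = Real.sqrt (Gfun J τ U V n) := by
  have hn : ∀ Q : ℕ → ℝ, gridNorm J Q ^ 2 = gridIP J Q Q := fun Q =>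
    Real.sq_sqrt (gridIP_self_nonneg J Q)
  simp only [energyE, Gfun, hn]


/-- energy dissipation of the fully discrete compact scheme (Corollary 3.1). -/
theorem stmt_11 (J N : ℕ) (hJ : 0 < J) (hN : 0 < N) (τ : ℝ) (hτ : 0 < τ)
    (p₀ : ℝ) (hp₀ : 0 < p₀) (P : ℝ → ℝ) (hP : ∀ z : ℝ, 0 ≤ z → p₀ ≤ P z)
    (U V : ℕ → ℕ → ℝ)
    (hUbc : ∀ n, U n 0 = 0 ∧ U n (2 * J) = 0)
    (hVbc : ∀ n, V n 0 = 0 ∧ V n (2 * J) = 0)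
    (hs1 : ∀ n ∈ Finset.Icc 1 N, ∀ j ∈ Finset.Icc 1 (2 * J - 1),
      cA (fun i => (U (n + 1) i - 2 * U n i + U (n - 1) i) / τ ^ 2) j
          + P (gridNormB J (V n) ^ 2)
              * cA (fun i => (U (n + 1) i - U (n - 1) i) / (2 * τ)) j
          + dxx J (fun i => (V (n + 1) i + V (n - 1) i) / 2) j
        = 0)
    (hs2 : ∀ n ∈ Finset.Icc 1 N, ∀ j ∈ Finset.Icc 1 (2 * J - 1),
      cA (fun i => (V (n + 1) i - V (n - 1) i) / (2 * τ)) j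
        = dxx J (fun i => (U (n + 1) i - U (n - 1) i) / (2 * τ)) j) :
    ∀ n ∈ Finset.Icc 1 N,
      0 ≤ energyE J τ U V n ∧ energyE J τ U V n ≤ energyE J τ U V 0 := by
  have hstep : ∀ n, 1 ≤ n → n ≤ N → Gfun J τ U V n ≤ Gfun J τ U V (n - 1) := by
    intro n h1n hnN
    have hmem : n ∈ Finset.Icc 1 N := by simp only [Finset.mem_Icc]; omega
    have hp : (0:ℝ) ≤ P (gridNormB J (V n) ^ 2) :=
      le_trans hp₀.le (hP _ (sq_nonneg _))
    have hle := step J hJ τ hτ (P (gridNormB J (V n) ^ 2)) hp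
      (U (n - 1)) (U n) (U (n + 1)) (V (n - 1)) (V n) (V (n + 1))
      (hUbc (n - 1)).1 (hUbc (n - 1)).2 (hUbc (n + 1)).1 (hUbc (n + 1)).2
      (hVbc (n - 1)).1 (hVbc (n - 1)).2 (hVbc (n + 1)).1 (hVbc (n + 1)).2
      (hs1 n hmem) (hs2 n hmem)
    have h1 : n - 1 + 1 = n := by omega
    simp only [Gfun, h1]
    exact hle
  have hmono : ∀ n, n ≤ N → Gfun J τ U V n ≤ Gfun J τ U V 0 := by
    intro n
    induction n with
    | zero => intro _; exact le_refl _
    | succ m ih =>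
      intro hm
      have h2 := hstep (m + 1) (by omega) hm
      have h3 : m + 1 - 1 = m := by omega
      rw [h3] at h2
      exact le_trans h2 (ih (by omega))
  intro n hn
  simp only [Finset.mem_Icc] at hn
  constructor
  · rw [energyE_eq]; exact Real.sqrt_nonneg _
  · rw [energyE_eq, energyE_eq]
    exact Real.sqrt_le_sqrt (hmono n hn.2)
end
end
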